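/- Let (X, μ) be a probability space and C a finite family of pairwise disjoint measurable sets. Suppose V is a measurable set that can be written as the union of at most 2^n members of a family D of measurable sets together with a μ-null set, and each member of D contains a member of C with difference of measure zero. If m > 2^n members of C with positive measure are contained in V (as the maximal ones intersecting V up to null sets), then we reach a contradiction; hence the number of positive-measure members of C contained in V is at most 2^n. -/

import Mathlib

open MeasureTheory

/-- Counting step: if `V` is a union of at most `2^n` members of `D'` together with a
`μ`-null set, each member of `D'` contains a member of the pairwise disjoint family `C`
with difference of measure zero, then at most `2^n` positive-measure members of `C`
are contained in `V`. -/
theorem counting_bound {X : Type*} [MeasurableSpace X] (μ : Measure X)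
    [IsProbabilityMeasure μ] (n : ℕ) (C D' : Finset (Set X)) (V : Set X)
    (hCmeas : ∀ c ∈ C, MeasurableSet c)
    (hDmeas : ∀ d ∈ D', MeasurableSet d)
    (hVmeas : MeasurableSet V)
    (hCdisj : ∀ c₁ ∈ C, ∀ c₂ ∈ C, c₁ ≠ c₂ → Disjoint c₁ c₂)
    (hcard : D'.card ≤ 2 ^ n)
    (hsub : ⋃₀ (D' : Set (Set X)) ⊆ V)
    (hnull : μ (V \ ⋃₀ (D' : Set (Set X))) = 0)
    (hcontain : ∀ d ∈ D', ∃ c ∈ C, c ⊆ d ∧ μ (d \ c) = 0) :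
    Nat.card {c : Set X // c ∈ C ∧ 0 < μ c ∧ c ⊆ V} ≤ 2 ^ n := by
  have key : ∀ c ∈ C, 0 < μ c → c ⊆ V → ∃ d ∈ D', 0 < μ (c ∩ d) := by
    intro c hc hpos hcV
    by_contra h
    push_neg at h
    have hz : ∀ d ∈ D', μ (c ∩ d) = 0 := fun d hd => le_antisymm (h d hd) zero_le
    have h1 : μ (c ∩ ⋃₀ (D' : Set (Set X))) = 0 := by
      rw [Set.sUnion_eq_biUnion, Set.inter_iUnion₂]
      refine measure_biUnion_null_iff D'.countable_toSet |>.2 ?_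
      intro d hd
      exact hz d hd
    have h2 : μ (c \ ⋃₀ (D' : Set (Set X))) = 0 :=
      measure_mono_null (Set.diff_subset_diff_left hcV) hnull
    have h3 : μ c ≤ μ (c ∩ ⋃₀ (D' : Set (Set X))) + μ (c \ ⋃₀ (D' : Set (Set X))) :=
      measure_le_inter_add_diff μ c _
    rw [h1, h2, add_zero] at h3
    exact absurd (le_antisymm h3 zero_le) hpos.ne'
  have uniq : ∀ d ∈ D', ∀ c₁ ∈ C, ∀ c₂ ∈ C, 0 < μ (c₁ ∩ d) → 0 < μ (c₂ ∩ d) → c₁ = c₂ := by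
    intro d hd c₁ h1 c₂ h2 hp1 hp2
    obtain ⟨c', hc', hsub', hnull'⟩ := hcontain d hd
    have main : ∀ c ∈ C, 0 < μ (c ∩ d) → c = c' := by
      intro c hcC hp
      by_contra hne
      have hdisj := hCdisj c hcC c' hc' hne
      have hss : c ∩ d ⊆ d \ c' := fun x hx =>
        ⟨hx.2, fun hx' => Set.disjoint_left.mp hdisj hx.1 hx'⟩
      exact absurd (measure_mono_null hss hnull') hp.ne'
    rw [main c₁ h1 hp1, main c₂ h2 hp2]
  -- build an injection into D'
  have : Nat.card {c : Set X // c ∈ C ∧ 0 < μ c ∧ c ⊆ V} ≤ Nat.card {d : Set X // d ∈ D'} := by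
    have hne : ∀ x : {c : Set X // c ∈ C ∧ 0 < μ c ∧ c ⊆ V},
        ∃ d, d ∈ D' ∧ 0 < μ (x.1 ∩ d) := by
      intro x
      obtain ⟨d, hd, hpd⟩ := key x.1 x.2.1 x.2.2.1 x.2.2.2
      exact ⟨d, hd, hpd⟩
    choose f hf1 hf2 using hne
    refine Nat.card_le_card_of_injective (fun x => ⟨f x, hf1 x⟩) ?_
    intro x y hxy
    have hfd : f x = f y := congrArg Subtype.val hxy
    have := uniq (f x) (hf1 x) x.1 x.2.1 y.1 y.2.1 (hf2 x) (hfd ▸ hf2 y)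
    exact Subtype.ext this
  calc Nat.card {c : Set X // c ∈ C ∧ 0 < μ c ∧ c ⊆ V}
      ≤ Nat.card {d : Set X // d ∈ D'} := this
    _ = D'.card := by simp [Nat.card_eq_fintype_card]
    _ ≤ 2 ^ n := hcard
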